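/- Let Σ_k and Σ_m be real n×n positive semidefinite matrices with range(Σ_k) = range(Σ_m), let μ ∈ range(Σ_m), and let Φ be a real ℓ×n matrix with rank(Σ_m^{1/2}·Φᵀ·Φ·Σ_m^{1/2}) = rank(Σ_m). For σ² > 0 define W_k(σ²) := Σ_k·Φᵀ·(σ²·I_ℓ + Φ·Σ_k·Φᵀ)⁻¹, W_m(σ²) := Σ_m·Φᵀ·(σ²·I_ℓ + Φ·Σ_m·Φᵀ)⁻¹, Σ_y(σ²) := σ²·I_ℓ + Φ·Σ_k·Φᵀ, M := μ·μᵀ, and the mismatched mean-squared error MSE_mis(σ²) := tr(Σ_k) − 2·tr(W_k(σ²)·Σ_y(σ²)·W_m(σ²)ᵀ) + tr(W_m(σ²)·Σ_y(σ²)·W_m(σ²)ᵀ) + tr(M) − 2·tr(M·Φᵀ·W_m(σ²)ᵀ) + tr(W_m(σ²)·Φ·M·Φᵀ·W_m(σ²)ᵀ). Then lim_{σ²→0⁺} MSE_mis(σ²) = 0. -/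

import Mathlib

open Matrix Filter Topology

open scoped ComplexOrder in
/-- The positive semidefinite square root of a positive semidefinite matrix, as defined in
Mathlib (December 2024); restored here since Mathlib has removed `Matrix.PosSemidef.sqrt`. -/
noncomputable def Matrix.PosSemidef.sqrt {n 𝕜 : Type*} [Fintype n] [RCLike 𝕜] [DecidableEq n]
    {A : Matrix n n 𝕜} (hA : A.PosSemidef) : Matrix n n 𝕜 :=
  hA.1.eigenvectorUnitary.1 * diagonal ((↑) ∘ (√·) ∘ hA.1.eigenvalues) *
  (star hA.1.eigenvectorUnitary : Matrix n n 𝕜)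

lemma Matrix.PosSemidef.posSemidef_sqrt {n : ℕ} {A : Matrix (Fin n) (Fin n) ℝ}
    (hA : A.PosSemidef) : hA.sqrt.PosSemidef := by
  unfold Matrix.PosSemidef.sqrt
  have hD : (diagonal ((↑) ∘ (√·) ∘ hA.1.eigenvalues) : Matrix (Fin n) (Fin n) ℝ).PosSemidef := by
    refine Matrix.posSemidef_diagonal_iff.mpr fun i => ?_
    simp [Real.sqrt_nonneg]
  exact hD.mul_mul_conjTranspose_same (hA.1.eigenvectorUnitary : Matrix (Fin n) (Fin n) ℝ)

lemma Matrix.PosSemidef.sqrt_mul_self {n : ℕ} {A : Matrix (Fin n) (Fin n) ℝ}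
    (hA : A.PosSemidef) : hA.sqrt * hA.sqrt = A := by
  have hU : (star (hA.1.eigenvectorUnitary : Matrix (Fin n) (Fin n) ℝ)) *
      (hA.1.eigenvectorUnitary : Matrix (Fin n) (Fin n) ℝ) = 1 :=
    mem_unitaryGroup_iff'.mp hA.1.eigenvectorUnitary.2
  unfold Matrix.PosSemidef.sqrt
  have hdd : (diagonal (fun i => ((RCLike.ofReal ∘ (√·) ∘ hA.1.eigenvalues) i : ℝ) *
      (RCLike.ofReal ∘ (√·) ∘ hA.1.eigenvalues) i) : Matrix (Fin n) (Fin n) ℝ)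
      = diagonal (RCLike.ofReal ∘ hA.1.eigenvalues) := by
    congr 1
    funext i
    simp [Real.mul_self_sqrt (hA.eigenvalues_nonneg i)]
  simp only [Matrix.mul_assoc]
  rw [← Matrix.mul_assoc (star _) (hA.1.eigenvectorUnitary : Matrix (Fin n) (Fin n) ℝ), hU,
    Matrix.one_mul, ← Matrix.mul_assoc (diagonal _) (diagonal _), Matrix.diagonal_mul_diagonal,
    hdd, ← Matrix.mul_assoc]
  exact hA.1.spectral_theorem.symm

private lemma range_sqrt_aux {n : ℕ} {A : Matrix (Fin n) (Fin n) ℝ} (hA : A.PosSemidef) :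
    LinearMap.range hA.sqrt.mulVecLin = LinearMap.range A.mulVecLin := by
  have hs : hA.sqrt * hA.sqrt = A := hA.sqrt_mul_self
  have hle : LinearMap.range A.mulVecLin ≤ LinearMap.range hA.sqrt.mulVecLin := by
    rintro x ⟨v, rfl⟩
    exact ⟨hA.sqrt *ᵥ v, by
      rw [Matrix.mulVecLin_apply, Matrix.mulVecLin_apply, Matrix.mulVec_mulVec, hs]⟩
  refine (Submodule.eq_of_le_of_finrank_eq hle ?_).symm
  have h1 : A.rank = hA.sqrt.rank := by
    conv_lhs => rw [← hs]
    have h2 := Matrix.rank_conjTranspose_mul_self hA.sqrt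
    rwa [hA.posSemidef_sqrt.1.eq] at h2
  exact h1

private lemma mat_eq_of_mulVec {m n : ℕ} {A B : Matrix (Fin m) (Fin n) ℝ}
    (h : ∀ v, A *ᵥ v = B *ᵥ v) : A = B := by
  ext i j
  have := congrFun (h (Pi.single j 1)) i
  simpa using this

set_option maxHeartbeats 2000000 in
/-- mismatched mean-squared error. If range(Σ_k) = range(Σ_m),
μ ∈ range(Σ_m) and rank(Σ_m^{1/2}·Φᵀ·Φ·Σ_m^{1/2}) = rank(Σ_m), then with
W_c(σ²) = Σ_c·Φᵀ·(σ²·I + Φ·Σ_c·Φᵀ)⁻¹, Σ_y(σ²) = σ²·I + Φ·Σ_k·Φᵀ and M = μ·μᵀ,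
MSE_mis(σ²) = tr(Σ_k) − 2·tr(W_k·Σ_y·W_mᵀ) + tr(W_m·Σ_y·W_mᵀ) + tr(M)
− 2·tr(M·Φᵀ·W_mᵀ) + tr(W_m·Φ·M·Φᵀ·W_mᵀ) tends to 0 as σ² → 0⁺. -/
theorem stmt_18 {n l : ℕ} (Sk Sm : Matrix (Fin n) (Fin n) ℝ)
    (hSk : Sk.PosSemidef) (hSm : Sm.PosSemidef)
    (hrange : LinearMap.range Sk.mulVecLin = LinearMap.range Sm.mulVecLin)
    (μ : Fin n → ℝ) (hμ : μ ∈ LinearMap.range Sm.mulVecLin)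
    (Φ : Matrix (Fin l) (Fin n) ℝ)
    (hrank : (hSm.sqrt * Φᵀ * Φ * hSm.sqrt).rank = Sm.rank)
    (Wk Wm : ℝ → Matrix (Fin n) (Fin l) ℝ)
    (hWk : ∀ σ2 : ℝ, Wk σ2 = Sk * Φᵀ * (σ2 • (1 : Matrix (Fin l) (Fin l) ℝ) + Φ * Sk * Φᵀ)⁻¹)
    (hWm : ∀ σ2 : ℝ, Wm σ2 = Sm * Φᵀ * (σ2 • (1 : Matrix (Fin l) (Fin l) ℝ) + Φ * Sm * Φᵀ)⁻¹)
    (Sy : ℝ → Matrix (Fin l) (Fin l) ℝ)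
    (hSy : ∀ σ2 : ℝ, Sy σ2 = σ2 • (1 : Matrix (Fin l) (Fin l) ℝ) + Φ * Sk * Φᵀ)
    (M : Matrix (Fin n) (Fin n) ℝ) (hM : M = Matrix.vecMulVec μ μ)
    (MSEmis : ℝ → ℝ)
    (hMSEmis : ∀ σ2 : ℝ, MSEmis σ2 =
        Sk.trace - 2 * (Wk σ2 * Sy σ2 * (Wm σ2)ᵀ).trace + (Wm σ2 * Sy σ2 * (Wm σ2)ᵀ).trace
          + M.trace - 2 * (M * Φᵀ * (Wm σ2)ᵀ).trace + (Wm σ2 * Φ * M * Φᵀ * (Wm σ2)ᵀ).trace) :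
    Tendsto MSEmis (nhdsWithin 0 (Set.Ioi 0)) (nhds 0) := by
  classical
  set S : Matrix (Fin n) (Fin n) ℝ := hSm.sqrt with hSdef
  have hSps : S.PosSemidef := hSm.posSemidef_sqrt
  have hSt : Sᵀ = S := by
    rw [← Matrix.conjTranspose_eq_transpose_of_trivial]; exact hSps.1
  have hSsq : S * S = Sm := hSm.sqrt_mul_self
  set C : Matrix (Fin l) (Fin n) ℝ := Φ * S with hCdef
  have hCt : Cᵀ = S * Φᵀ := by rw [hCdef, Matrix.transpose_mul, hSt]
  set G : Matrix (Fin n) (Fin n) ℝ := Cᵀ * C with hGdef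
  have hGeq : S * Φᵀ * Φ * S = G := by
    rw [hGdef, hCdef, Matrix.transpose_mul, hSt]
    simp only [Matrix.mul_assoc]
  have hGps : G.PosSemidef := by
    rw [hGdef, ← Matrix.conjTranspose_eq_transpose_of_trivial]
    exact Matrix.posSemidef_conjTranspose_mul_self C
  have hGh : G.IsHermitian := hGps.1
  set d : Fin n → ℝ := hGh.eigenvalues with hddef
  have hd0 : ∀ i, 0 ≤ d i := hGps.eigenvalues_nonneg
  set U : Matrix (Fin n) (Fin n) ℝ := (hGh.eigenvectorUnitary : Matrix (Fin n) (Fin n) ℝ) with hUdef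
  have hU1 : U * star U = 1 := mem_unitaryGroup_iff.mp hGh.eigenvectorUnitary.2
  have hU2 : star U * U = 1 := mem_unitaryGroup_iff'.mp hGh.eigenvectorUnitary.2
  set F : (Fin n → ℝ) → Matrix (Fin n) (Fin n) ℝ :=
    fun v => U * Matrix.diagonal v * star U with hFdef
  have hcan : ∀ X : Matrix (Fin n) (Fin n) ℝ, star U * (U * X) = X := by
    intro X; rw [← Matrix.mul_assoc, hU2, Matrix.one_mul]
  have hFmul : ∀ v w : Fin n → ℝ, F v * F w = F (fun i => v i * w i) := by
    intro v w
    simp only [hFdef]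
    calc U * Matrix.diagonal v * star U * (U * Matrix.diagonal w * star U)
        = U * (Matrix.diagonal v * (star U * (U * (Matrix.diagonal w * star U)))) := by
          simp only [Matrix.mul_assoc]
      _ = U * (Matrix.diagonal v * (Matrix.diagonal w * star U)) := by rw [hcan]
      _ = U * Matrix.diagonal (fun i => v i * w i) * star U := by
          rw [← Matrix.mul_assoc (Matrix.diagonal v) (Matrix.diagonal w),
            Matrix.diagonal_mul_diagonal, ← Matrix.mul_assoc]
  have hFadd : ∀ v w : Fin n → ℝ, F v + F w = F (fun i => v i + w i) := by
    intro v w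
    simp only [hFdef]
    rw [← Matrix.add_mul, ← Matrix.mul_add, Matrix.diagonal_add]
  have hFsmul : ∀ (r : ℝ) (v : Fin n → ℝ), r • F v = F (fun i => r * v i) := by
    intro r v
    simp only [hFdef]
    have h1 : (fun i => r * v i) = r • v := rfl
    rw [h1, Matrix.diagonal_smul, Matrix.mul_smul, Matrix.smul_mul]
  have hFone : F (fun _ => 1) = 1 := by
    simp only [hFdef]
    have h1 : (Matrix.diagonal (fun _ : Fin n => (1:ℝ))) = 1 := Matrix.diagonal_one
    rw [h1, Matrix.mul_one, hU1]
  have hF0 : F (fun _ => 0) = 0 := by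
    simp only [hFdef]
    have h1 : (Matrix.diagonal (fun _ : Fin n => (0:ℝ))) = 0 := Matrix.diagonal_zero
    rw [h1, Matrix.mul_zero, Matrix.zero_mul]
  have hUstar : star U = Uᵀ := by
    rw [Matrix.star_eq_conjTranspose, Matrix.conjTranspose_eq_transpose_of_trivial]
  have hFT : ∀ v : Fin n → ℝ, (F v)ᵀ = F v := by
    intro v
    simp only [hFdef, hUstar]
    rw [Matrix.transpose_mul, Matrix.transpose_mul, Matrix.transpose_transpose,
      Matrix.diagonal_transpose, Matrix.mul_assoc]
  have hGF : G = F d := by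
    have hs := hGh.spectral_theorem
    have hre : (RCLike.ofReal ∘ hGh.eigenvalues : Fin n → ℝ) = d := by
      rw [RCLike.ofReal_real_eq_id]; rfl
    rw [hre] at hs
    exact hs
  have hsm1F : ∀ σ2 : ℝ, σ2 • (1 : Matrix (Fin n) (Fin n) ℝ) = F (fun _ => σ2) := by
    intro σ2
    simp only [hFdef]
    calc σ2 • (1 : Matrix (Fin n) (Fin n) ℝ)
        = σ2 • (U * star U) := by rw [hU1]
      _ = U * (σ2 • (1 : Matrix (Fin n) (Fin n) ℝ) * star U) := by
          rw [Matrix.smul_mul, Matrix.one_mul, Matrix.mul_smul]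
      _ = U * Matrix.diagonal (fun _ => σ2) * star U := by
          rw [Matrix.smul_one_eq_diagonal, Matrix.mul_assoc]
  have hsmul1 : ∀ σ2 : ℝ, σ2 • (1 : Matrix (Fin n) (Fin n) ℝ) + G = F (fun i => σ2 + d i) := by
    intro σ2
    rw [hsm1F, hGF, hFadd]
  have hjne : ∀ σ2 : ℝ, 0 < σ2 → ∀ i, σ2 + d i ≠ 0 :=
    fun σ2 h i => (add_pos_of_pos_of_nonneg h (hd0 i)).ne'
  -- range facts
  have rS : LinearMap.range S.mulVecLin = LinearMap.range Sm.mulVecLin := range_sqrt_aux hSm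
  have rR : LinearMap.range hSk.sqrt.mulVecLin = LinearMap.range Sk.mulVecLin := range_sqrt_aux hSk
  have rGle : LinearMap.range G.mulVecLin ≤ LinearMap.range S.mulVecLin := by
    have h1 : G = S * (Φᵀ * (Φ * S)) := by
      rw [hGdef, hCdef, Matrix.transpose_mul, hSt]; simp only [Matrix.mul_assoc]
    rw [h1, Matrix.mulVecLin_mul]
    exact LinearMap.range_comp_le_range _ _
  have rG : LinearMap.range G.mulVecLin = LinearMap.range S.mulVecLin := by
    apply Submodule.eq_of_le_of_finrank_eq rGle
    have h1 : G.rank = Sm.rank := by rw [← hGeq]; exact hrank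
    have h2 : Module.finrank ℝ (LinearMap.range Sm.mulVecLin)
        = Module.finrank ℝ (LinearMap.range S.mulVecLin) := by rw [rS]
    calc Module.finrank ℝ (LinearMap.range G.mulVecLin) = G.rank := rfl
      _ = Sm.rank := h1
      _ = Module.finrank ℝ (LinearMap.range Sm.mulVecLin) := rfl
      _ = _ := h2
  -- decomposition of Sk
  have hcolR : ∀ j, ∃ x, S *ᵥ x = fun i => hSk.sqrt i j := by
    intro j
    have hmem : (fun i => hSk.sqrt i j) ∈ LinearMap.range hSk.sqrt.mulVecLin := by
      refine ⟨Pi.single j 1, ?_⟩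
      rw [Matrix.mulVecLin_apply]
      simp
      rfl
    rw [rR, hrange, ← rS] at hmem
    obtain ⟨x, hx⟩ := hmem
    exact ⟨x, by rw [← Matrix.mulVecLin_apply]; exact hx⟩
  choose Lc hLc using hcolR
  set L : Matrix (Fin n) (Fin n) ℝ := Matrix.of (fun i j => Lc j i) with hLdef
  have hSL : S * L = hSk.sqrt := by
    ext i j
    have h := congrFun (hLc j) i
    simp only [Matrix.mulVec, dotProduct] at h
    simp only [Matrix.mul_apply, hLdef, Matrix.of_apply]
    exact h
  set K : Matrix (Fin n) (Fin n) ℝ := L * Lᵀ with hKdef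
  have hRt : (hSk.sqrt)ᵀ = hSk.sqrt := by
    rw [← Matrix.conjTranspose_eq_transpose_of_trivial]; exact hSk.posSemidef_sqrt.1
  have hSkdec : Sk = S * K * S := by
    calc Sk = hSk.sqrt * hSk.sqrt := hSk.sqrt_mul_self.symm
      _ = (S * L) * (S * L)ᵀ := by rw [hSL, hRt]
      _ = S * K * S := by
          rw [Matrix.transpose_mul, hSt, hKdef]
          simp only [Matrix.mul_assoc]
  -- decomposition of M
  obtain ⟨w, hw⟩ : ∃ w, S *ᵥ w = μ := by
    have hmem : μ ∈ LinearMap.range S.mulVecLin := by rw [rS]; exact hμ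
    obtain ⟨x, hx⟩ := hmem
    exact ⟨x, by rw [← Matrix.mulVecLin_apply]; exact hx⟩
  set W₀ : Matrix (Fin n) (Fin n) ℝ := Matrix.vecMulVec w w with hWodef
  have hMdec : M = S * W₀ * S := by
    rw [hM, ← hw, hWodef]
    rw [Matrix.vecMulVec_eq Unit, Matrix.vecMulVec_eq Unit]
    rw [Matrix.replicateCol_mulVec, Matrix.replicateRow_mulVec, Matrix.transpose_mul, Matrix.transpose_replicateCol, hSt]
    simp only [Matrix.mul_assoc]
  -- the projection
  set e : Fin n → ℝ := fun i => if d i = 0 then 0 else 1 with hedef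
  have hPG : F e * G = G := by
    have hed : (fun i => e i * d i) = d := by
      funext i; by_cases hdi : d i = 0 <;> simp [hedef, hdi]
    rw [hGF, hFmul, hed]
  have hPS : F e * S = S := by
    apply mat_eq_of_mulVec
    intro v
    have hmem : S *ᵥ v ∈ LinearMap.range G.mulVecLin := by
      rw [rG]; exact ⟨v, by rw [Matrix.mulVecLin_apply]⟩
    obtain ⟨u, hu⟩ := hmem
    rw [Matrix.mulVecLin_apply] at hu
    rw [← Matrix.mulVec_mulVec, ← hu, Matrix.mulVec_mulVec, hPG]
  have hSP : S * F e = S := by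
    have h := congrArg Matrix.transpose hPS
    rwa [Matrix.transpose_mul, hSt, hFT] at h
  -- positive definiteness on the l-side
  have hsm1pd : ∀ σ2 : ℝ, 0 < σ2 → (σ2 • (1 : Matrix (Fin l) (Fin l) ℝ)).PosDef := by
    intro σ2 h
    rw [Matrix.smul_one_eq_diagonal]
    exact Matrix.posDef_diagonal_iff.mpr fun _ => h
  have hpsdB : (Φ * Sm * Φᵀ).PosSemidef := by
    have h := hSm.mul_mul_conjTranspose_same Φ
    rwa [Matrix.conjTranspose_eq_transpose_of_trivial] at h
  have hpsdA : (Φ * Sk * Φᵀ).PosSemidef := by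
    have h := hSk.mul_mul_conjTranspose_same Φ
    rwa [Matrix.conjTranspose_eq_transpose_of_trivial] at h
  have hBu : ∀ σ2 : ℝ, 0 < σ2 →
      IsUnit (σ2 • (1 : Matrix (Fin l) (Fin l) ℝ) + Φ * Sm * Φᵀ).det :=
    fun σ2 h => ((hsm1pd σ2 h).add_posSemidef hpsdB).det_pos.ne'.isUnit
  have hAu : ∀ σ2 : ℝ, 0 < σ2 →
      IsUnit (σ2 • (1 : Matrix (Fin l) (Fin l) ℝ) + Φ * Sk * Φᵀ).det :=
    fun σ2 h => ((hsm1pd σ2 h).add_posSemidef hpsdA).det_pos.ne'.isUnit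
  have hBeq : Φ * Sm * Φᵀ = C * Cᵀ := by
    rw [← hSsq, hCdef, Matrix.transpose_mul, hSt]
    simp only [Matrix.mul_assoc]
  have hAeq : Φ * Sk * Φᵀ = C * (K * Cᵀ) := by
    rw [hSkdec, hCdef, Matrix.transpose_mul, hSt]
    simp only [Matrix.mul_assoc]
  have hSmt : Smᵀ = Sm := by
    rw [← Matrix.conjTranspose_eq_transpose_of_trivial]; exact hSm.1
  clear_value S C G d U F L K W₀ e
  -- helper rewriting lemmas
  have hSPhi : ∀ {m : ℕ} (X : Matrix (Fin l) (Fin m) ℝ), S * (Φᵀ * X) = Cᵀ * X := by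
    intro m X; rw [hCt, ← Matrix.mul_assoc]
  have hPhiS : ∀ {m : ℕ} (X : Matrix (Fin n) (Fin m) ℝ), Φ * (S * X) = C * X := by
    intro m X; rw [hCdef, ← Matrix.mul_assoc]
  have hGX : ∀ {m : ℕ} (X : Matrix (Fin n) (Fin m) ℝ), Cᵀ * (C * X) = G * X := by
    intro m X; rw [hGdef, ← Matrix.mul_assoc]
  -- the limit functional
  set Ψ : (Fin n → ℝ) × (Fin n → ℝ) → ℝ := fun p =>
    Sk.trace - 2 * (S * K * F p.1 * S).trace
      + ((S * F p.2 * S).trace + (S * (F p.1 * K * F p.1) * S).trace)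
      + M.trace - 2 * (S * W₀ * F p.1 * S).trace + (S * (F p.1 * W₀ * F p.1) * S).trace
    with hΨdef
  -- main identity for σ2 > 0
  have main : ∀ σ2 : ℝ, 0 < σ2 → MSEmis σ2 =
      Ψ (fun i => (σ2 + d i)⁻¹ * d i,
         fun i => σ2 * ((σ2 + d i)⁻¹ * ((σ2 + d i)⁻¹ * d i))) := by
    intro σ2 hσ
    set jf : Fin n → ℝ := fun i => (σ2 + d i)⁻¹ with hjfdef
    set hf : Fin n → ℝ := fun i => (σ2 + d i)⁻¹ * d i with hhfdef
    set gf : Fin n → ℝ := fun i => σ2 * ((σ2 + d i)⁻¹ * ((σ2 + d i)⁻¹ * d i)) with hgfdef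
    set Bi : Matrix (Fin l) (Fin l) ℝ :=
      (σ2 • (1 : Matrix (Fin l) (Fin l) ℝ) + Φ * Sm * Φᵀ)⁻¹ with hBidef
    have hBid : Bi * (σ2 • (1 : Matrix (Fin l) (Fin l) ℝ) + Φ * Sm * Φᵀ) = 1 :=
      Matrix.nonsing_inv_mul _ (hBu σ2 hσ)
    have hkey : (σ2 • (1 : Matrix (Fin l) (Fin l) ℝ) + Φ * Sm * Φᵀ) * (C * F jf) = C := by
      rw [hBeq, Matrix.add_mul, Matrix.smul_mul, Matrix.one_mul]
      have h1 : C * Cᵀ * (C * F jf) = C * (G * F jf) := by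
        calc C * Cᵀ * (C * F jf) = C * (Cᵀ * (C * F jf)) := by simp only [Matrix.mul_assoc]
          _ = C * (G * F jf) := by rw [hGX]
      rw [h1]
      have h2 : σ2 • (C * F jf) = C * (σ2 • F jf) := by rw [Matrix.mul_smul]
      rw [h2, ← Matrix.mul_add, hFsmul, hGF, hFmul, hFadd]
      have h3 : (fun i => σ2 * jf i + d i * jf i) = (fun _ : Fin n => (1:ℝ)) := by
        funext i
        simp only [hjfdef]
        rw [← add_mul, mul_inv_cancel₀ (hjne σ2 hσ i)]
      rw [h3, hFone, Matrix.mul_one]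
    have hpush : Bi * C = C * F jf := by
      calc Bi * C
          = Bi * ((σ2 • (1 : Matrix (Fin l) (Fin l) ℝ) + Φ * Sm * Φᵀ) * (C * F jf)) := by
            rw [hkey]
        _ = (Bi * (σ2 • (1 : Matrix (Fin l) (Fin l) ℝ) + Φ * Sm * Φᵀ)) * (C * F jf) := by
            rw [← Matrix.mul_assoc]
        _ = C * F jf := by rw [hBid, Matrix.one_mul]
    have hBit : Biᵀ = Bi := by
      rw [hBidef, Matrix.transpose_nonsing_inv]
      congr 1
      rw [Matrix.transpose_add, Matrix.transpose_smul, Matrix.transpose_one,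
        Matrix.transpose_mul, Matrix.transpose_mul, Matrix.transpose_transpose, hSmt,
        Matrix.mul_assoc]
    have hpushT : Cᵀ * Bi = F jf * Cᵀ := by
      have h := congrArg Matrix.transpose hpush
      rwa [Matrix.transpose_mul, Matrix.transpose_mul, hBit, hFT] at h
    have hjd : (fun i => jf i * d i) = hf := by
      funext i; simp only [hjfdef, hhfdef]
    have hdj : (fun i => d i * jf i) = hf := by
      funext i; simp only [hjfdef, hhfdef]; ring
    have hGjf : G * F jf = F hf := by rw [hGF, hFmul, hdj]
    have hjfG : F jf * G = F hf := by rw [hGF, hFmul, hjd]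
    have hGjfX : ∀ X : Matrix (Fin n) (Fin n) ℝ, G * (F jf * X) = F hf * X := by
      intro X; rw [← Matrix.mul_assoc, hGjf]
    have hjfGX : ∀ X : Matrix (Fin n) (Fin n) ℝ, F jf * (G * X) = F hf * X := by
      intro X; rw [← Matrix.mul_assoc, hjfG]
    have hCDC : Cᵀ * (Bi * C) = F hf := by
      calc Cᵀ * (Bi * C) = (Cᵀ * Bi) * C := by rw [Matrix.mul_assoc]
        _ = F jf * (Cᵀ * C) := by rw [hpushT, Matrix.mul_assoc]
        _ = F jf * G := by rw [← hGdef]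
        _ = F hf := hjfG
    have hWm' : Wm σ2 = S * (F jf * Cᵀ) := by
      rw [hWm σ2, ← hBidef, ← hSsq]
      calc S * S * Φᵀ * Bi = S * (S * (Φᵀ * Bi)) := by simp only [Matrix.mul_assoc]
        _ = S * (Cᵀ * Bi) := by rw [hSPhi]
        _ = S * (F jf * Cᵀ) := by rw [hpushT]
    have hWmT : (Wm σ2)ᵀ = C * F jf * S := by
      rw [hWm', Matrix.transpose_mul, Matrix.transpose_mul, Matrix.transpose_transpose,
        hSt, hFT]
    have hWkSy : Wk σ2 * Sy σ2 = Sk * Φᵀ := by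
      rw [hWk σ2, hSy σ2, Matrix.mul_assoc (Sk * Φᵀ),
        Matrix.nonsing_inv_mul _ (hAu σ2 hσ), Matrix.mul_one]
    have hE1 : Wk σ2 * Sy σ2 * (Wm σ2)ᵀ = S * K * F hf * S := by
      rw [hWkSy, hWmT, hSkdec]
      calc S * K * S * Φᵀ * (C * F jf * S)
          = S * (K * (S * (Φᵀ * (C * (F jf * S))))) := by simp only [Matrix.mul_assoc]
        _ = S * (K * (Cᵀ * (C * (F jf * S)))) := by rw [hSPhi]
        _ = S * (K * (G * (F jf * S))) := by rw [hGX]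
        _ = S * (K * (F hf * S)) := by rw [hGjfX]
        _ = S * K * F hf * S := by simp only [Matrix.mul_assoc]
    have hE3 : M * Φᵀ * (Wm σ2)ᵀ = S * W₀ * F hf * S := by
      rw [hWmT, hMdec]
      calc S * W₀ * S * Φᵀ * (C * F jf * S)
          = S * (W₀ * (S * (Φᵀ * (C * (F jf * S))))) := by simp only [Matrix.mul_assoc]
        _ = S * (W₀ * (Cᵀ * (C * (F jf * S)))) := by rw [hSPhi]
        _ = S * (W₀ * (G * (F jf * S))) := by rw [hGX]
        _ = S * (W₀ * (F hf * S)) := by rw [hGjfX]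
        _ = S * W₀ * F hf * S := by simp only [Matrix.mul_assoc]
    have hE4 : Wm σ2 * Φ * M * Φᵀ * (Wm σ2)ᵀ = S * (F hf * W₀ * F hf) * S := by
      rw [hWmT, hWm', hMdec]
      calc S * (F jf * Cᵀ) * Φ * (S * W₀ * S) * Φᵀ * (C * F jf * S)
          = S * (F jf * (Cᵀ * (Φ * (S * (W₀ * (S * (Φᵀ * (C * (F jf * S))))))))) := by
            simp only [Matrix.mul_assoc]
        _ = S * (F jf * (Cᵀ * (Φ * (S * (W₀ * (Cᵀ * (C * (F jf * S)))))))) := by rw [hSPhi]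
        _ = S * (F jf * (Cᵀ * (Φ * (S * (W₀ * (G * (F jf * S))))))) := by rw [hGX]
        _ = S * (F jf * (Cᵀ * (Φ * (S * (W₀ * (F hf * S)))))) := by rw [hGjfX]
        _ = S * (F jf * (Cᵀ * (C * (W₀ * (F hf * S))))) := by rw [hPhiS]
        _ = S * (F jf * (G * (W₀ * (F hf * S)))) := by rw [hGX]
        _ = S * (F hf * (W₀ * (F hf * S))) := by rw [hjfGX]
        _ = S * (F hf * W₀ * F hf) * S := by simp only [Matrix.mul_assoc]
    have hterm1 : S * (F jf * Cᵀ) * (σ2 • (1 : Matrix (Fin l) (Fin l) ℝ)) * (C * F jf * S)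
        = S * F gf * S := by
      have h1 : S * (F jf * Cᵀ) * (σ2 • (1 : Matrix (Fin l) (Fin l) ℝ)) * (C * F jf * S)
          = σ2 • (S * (F jf * (Cᵀ * (C * (F jf * S))))) := by
        rw [Matrix.mul_smul, Matrix.mul_one, Matrix.smul_mul]
        congr 1
        simp only [Matrix.mul_assoc]
      rw [h1, hGX, hjfGX]
      have h2 : F hf * (F jf * S) = F (fun i => hf i * jf i) * S := by
        rw [← Matrix.mul_assoc, hFmul]
      rw [h2]
      have h3 : F gf = σ2 • F (fun i => hf i * jf i) := by
        have harg : (fun i => σ2 * (fun i => hf i * jf i) i) = gf := by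
          funext i
          simp only [hgfdef, hjfdef, hhfdef]
          ring
        rw [hFsmul, harg]
      rw [h3, Matrix.mul_smul, Matrix.smul_mul, Matrix.mul_assoc]
    have hterm2 : S * (F jf * Cᵀ) * (C * (K * Cᵀ)) * (C * F jf * S)
        = S * (F hf * K * F hf) * S := by
      calc S * (F jf * Cᵀ) * (C * (K * Cᵀ)) * (C * F jf * S)
          = S * (F jf * (Cᵀ * (C * (K * (Cᵀ * (C * (F jf * S))))))) := by
            simp only [Matrix.mul_assoc]
        _ = S * (F jf * (G * (K * (Cᵀ * (C * (F jf * S)))))) := by rw [hGX]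
        _ = S * (F jf * (G * (K * (G * (F jf * S))))) := by rw [hGX]
        _ = S * (F hf * (K * (G * (F jf * S)))) := by rw [hjfGX]
        _ = S * (F hf * (K * (F hf * S))) := by rw [hGjfX]
        _ = S * (F hf * K * F hf) * S := by simp only [Matrix.mul_assoc]
    have hE2 : Wm σ2 * Sy σ2 * (Wm σ2)ᵀ = S * F gf * S + S * (F hf * K * F hf) * S := by
      rw [hWmT, hWm', hSy σ2, hAeq, Matrix.mul_add, Matrix.add_mul]
      rw [hterm1, hterm2]
    rw [hMSEmis σ2, hE1, hE2, hE3, hE4]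
    simp only [hΨdef, Matrix.trace_add]
  -- value of Ψ at the limit point
  have hΨ0 : Ψ (e, fun _ => (0:ℝ)) = 0 := by
    have t1 : S * K * F e * S = Sk := by
      rw [Matrix.mul_assoc (S * K), hPS, ← hSkdec]
    have t2 : S * (F e * K * F e) * S = Sk := by
      calc S * (F e * K * F e) * S = S * (F e * (K * (F e * S))) := by
            simp only [Matrix.mul_assoc]
        _ = S * (F e * (K * S)) := by rw [hPS]
        _ = (S * F e) * (K * S) := by rw [← Matrix.mul_assoc]
        _ = S * (K * S) := by rw [hSP]
        _ = Sk := by rw [← Matrix.mul_assoc, ← hSkdec]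
    have t3 : S * W₀ * F e * S = M := by
      rw [Matrix.mul_assoc (S * W₀), hPS, ← hMdec]
    have t4 : S * (F e * W₀ * F e) * S = M := by
      calc S * (F e * W₀ * F e) * S = S * (F e * (W₀ * (F e * S))) := by
            simp only [Matrix.mul_assoc]
        _ = S * (F e * (W₀ * S)) := by rw [hPS]
        _ = (S * F e) * (W₀ * S) := by rw [← Matrix.mul_assoc]
        _ = S * (W₀ * S) := by rw [hSP]
        _ = M := by rw [← Matrix.mul_assoc, ← hMdec]
    simp only [hΨdef]
    rw [hF0, t1, t2, t3, t4, Matrix.mul_zero, Matrix.zero_mul, Matrix.trace_zero]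
    ring
  -- the limits
  have hT1 : Tendsto (fun σ2 : ℝ => (fun i => (σ2 + d i)⁻¹ * d i : Fin n → ℝ))
      (nhdsWithin 0 (Set.Ioi 0)) (nhds e) := by
    rw [tendsto_pi_nhds]
    intro i
    by_cases hdi : d i = 0
    · have hfn : (fun σ2 : ℝ => (σ2 + d i)⁻¹ * d i) = fun _ => (0:ℝ) := by
        funext x; rw [hdi, mul_zero]
      have he : e i = 0 := by simp [hedef, hdi]
      simp only [hfn, he]
      exact tendsto_const_nhds
    · have hne : (0:ℝ) + d i ≠ 0 := by rw [zero_add]; exact hdi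
      have hc : ContinuousAt (fun σ2 : ℝ => (σ2 + d i)⁻¹ * d i) 0 :=
        ((continuousAt_id.add continuousAt_const).inv₀ hne).mul continuousAt_const
      have h := hc.mono_left (nhdsWithin_le_nhds (s := Set.Ioi (0:ℝ)))
      simp only [zero_add] at h
      rw [inv_mul_cancel₀ hdi] at h
      have he : e i = 1 := by simp [hedef, hdi]
      rw [he]
      exact h
  have hT2 : Tendsto (fun σ2 : ℝ =>
        (fun i => σ2 * ((σ2 + d i)⁻¹ * ((σ2 + d i)⁻¹ * d i)) : Fin n → ℝ))
      (nhdsWithin 0 (Set.Ioi 0)) (nhds (fun _ => (0:ℝ))) := by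
    rw [tendsto_pi_nhds]
    intro i
    by_cases hdi : d i = 0
    · have hfn : (fun σ2 : ℝ => σ2 * ((σ2 + d i)⁻¹ * ((σ2 + d i)⁻¹ * d i))) = fun _ => (0:ℝ) := by
        funext x; rw [hdi]; ring
      simp only [hfn]
      exact tendsto_const_nhds
    · have hne : (0:ℝ) + d i ≠ 0 := by rw [zero_add]; exact hdi
      have hinv : ContinuousAt (fun σ2 : ℝ => (σ2 + d i)⁻¹) 0 :=
        (continuousAt_id.add continuousAt_const).inv₀ hne
      have hc : ContinuousAt (fun σ2 : ℝ => σ2 * ((σ2 + d i)⁻¹ * ((σ2 + d i)⁻¹ * d i))) 0 :=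
        continuousAt_id.mul (hinv.mul (hinv.mul continuousAt_const))
      have h := hc.mono_left (nhdsWithin_le_nhds (s := Set.Ioi (0:ℝ)))
      simp only [zero_mul] at h
      exact h
  -- continuity of Ψ
  have hFc : Continuous F := by
    rw [hFdef]
    exact (continuous_const.matrix_mul continuous_id.matrix_diagonal).matrix_mul
      continuous_const
  have hΨc : Continuous Ψ := by
    rw [hΨdef]
    have c1 : Continuous fun p : (Fin n → ℝ) × (Fin n → ℝ) => F p.1 :=
      hFc.comp continuous_fst
    have c2 : Continuous fun p : (Fin n → ℝ) × (Fin n → ℝ) => F p.2 :=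
      hFc.comp continuous_snd
    have t1 : Continuous fun p : (Fin n → ℝ) × (Fin n → ℝ) => (S * K * F p.1 * S).trace :=
      (((continuous_const.matrix_mul c1).matrix_mul continuous_const)).matrix_trace
    have t2 : Continuous fun p : (Fin n → ℝ) × (Fin n → ℝ) => (S * F p.2 * S).trace :=
      (((continuous_const.matrix_mul c2).matrix_mul continuous_const)).matrix_trace
    have t3 : Continuous fun p : (Fin n → ℝ) × (Fin n → ℝ) =>
        (S * (F p.1 * K * F p.1) * S).trace :=
      ((continuous_const.matrix_mul ((c1.matrix_mul continuous_const).matrix_mul c1)).matrix_mul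
        continuous_const).matrix_trace
    have t4 : Continuous fun p : (Fin n → ℝ) × (Fin n → ℝ) => (S * W₀ * F p.1 * S).trace :=
      (((continuous_const.matrix_mul c1).matrix_mul continuous_const)).matrix_trace
    have t5 : Continuous fun p : (Fin n → ℝ) × (Fin n → ℝ) =>
        (S * (F p.1 * W₀ * F p.1) * S).trace :=
      ((continuous_const.matrix_mul ((c1.matrix_mul continuous_const).matrix_mul c1)).matrix_mul
        continuous_const).matrix_trace
    exact ((((continuous_const.sub (continuous_const.mul t1)).add (t2.add t3)).add
      continuous_const).sub (continuous_const.mul t4)).add t5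
  -- assemble
  have hpair : Tendsto (fun σ2 : ℝ =>
      ((fun i => (σ2 + d i)⁻¹ * d i : Fin n → ℝ),
       (fun i => σ2 * ((σ2 + d i)⁻¹ * ((σ2 + d i)⁻¹ * d i)) : Fin n → ℝ)))
      (nhdsWithin 0 (Set.Ioi 0)) (nhds (e, fun _ => (0:ℝ))) :=
    hT1.prodMk_nhds hT2
  have hcomp := Filter.Tendsto.comp (hΨc.continuousAt (x := (e, fun _ => (0:ℝ)))) hpair
  rw [hΨ0] at hcomp
  refine hcomp.congr' ?_
  filter_upwards [self_mem_nhdsWithin] with x hx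
  exact (main x hx).symm
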